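/- Let Φ : (M₁,Ω₁) → (M₂,Ω₂) be a state-preserving Markov map with adjoint Φ^♯ between abelian standard-form von Neumann algebras (so Mᵢ = Mᵢ'). Then Φ is factorizable, with minimal factorization given by α = σ_{Φ^♯} and β(A) = W*τ_{Φ^♯}(J₁AJ₁)W where W : L_{Φ^♯} → L_{Φ'} is the anti-unitary W[X⊗h] = [J₂XJ₂ ⊗ J₁h]; the factorizing algebra R = σ_{Φ^♯}(M₂) ∨ τ_{Φ^♯}(M₁) has Ω_{Φ^♯} as a cyclic and separating vector. -/

import Mathlib

open scoped InnerProductSpace ComplexOrder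
open ContinuousLinearMap (adjoint)

noncomputable section

/-- Complete positivity of a map `Φ` relative to a subset `M` of operators: matrix
amplifications preserve positivity, expressed on vectors. -/
def IsCP {H K : Type*} [NormedAddCommGroup H] [InnerProductSpace ℂ H]
    [NormedAddCommGroup K] [InnerProductSpace ℂ K]
    (M : Set (H →L[ℂ] H)) (Φ : (H →L[ℂ] H) →ₗ[ℂ] (K →L[ℂ] K)) : Prop :=
  ∀ (n : ℕ) (B : Fin n → Fin n → (H →L[ℂ] H)),
    (∀ i j, B i j ∈ M) →
    (∀ v : Fin n → H, 0 ≤ ∑ i, ∑ j, ⟪v i, (B i j) (v j)⟫_ℂ) →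
    ∀ w : Fin n → K, 0 ≤ ∑ i, ∑ j, ⟪w i, (Φ (B i j)) (w j)⟫_ℂ

/-- The Stinespring space `L_Φ` of a (completely positive) map `Φ`, defined on the
subset `M` of `B(H)` and taking values in `B(K)`: the separation-completion of the
algebraic tensor product `M ⊗ K` with respect to the semi-inner product
`⟨A ⊗ h, X ⊗ k⟩ = ⟨h, Φ(A* X) k⟩`, presented abstractly as a Hilbert space `L`
together with the bilinear map `emb A h = [A ⊗ h]` having dense span. -/
structure StinespringData {H K : Type*}
    [NormedAddCommGroup H] [InnerProductSpace ℂ H] [CompleteSpace H]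
    [NormedAddCommGroup K] [InnerProductSpace ℂ K] [CompleteSpace K]
    (M : Set (H →L[ℂ] H)) (Φ : (H →L[ℂ] H) →ₗ[ℂ] (K →L[ℂ] K))
    (L : Type*) [NormedAddCommGroup L] [InnerProductSpace ℂ L] [CompleteSpace L] where
  emb : (H →L[ℂ] H) →ₗ[ℂ] K →ₗ[ℂ] L
  inner_emb : ∀ A X : H →L[ℂ] H, A ∈ M → X ∈ M → ∀ h k : K,
    ⟪emb A h, emb X k⟫_ℂ = ⟪h, Φ (star A * X) k⟫_ℂ
  dense_span :
    (Submodule.span ℂ {x : L | ∃ A ∈ M, ∃ h : K, x = emb A h}).topologicalClosure = ⊤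
/-- `Ω` is a cyclic vector for the set of operators `M`. -/
def IsCyclicVec {H : Type*} [NormedAddCommGroup H] [InnerProductSpace ℂ H]
    (M : Set (H →L[ℂ] H)) (Ω : H) : Prop :=
  (Submodule.span ℂ {x : H | ∃ A ∈ M, x = A Ω}).topologicalClosure = ⊤

/-- `Ω` is a separating vector for the set of operators `M`. -/
def IsSeparatingVec {H : Type*} [NormedAddCommGroup H] [InnerProductSpace ℂ H]
    (M : Set (H →L[ℂ] H)) (Ω : H) : Prop :=
  ∀ A ∈ M, A Ω = 0 → A = 0

/-- `Φ` preserves the vector states given by `Ω₁`, `Ω₂` on the algebra `M`. -/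
def IsStatePreserving {H K : Type*} [NormedAddCommGroup H] [InnerProductSpace ℂ H]
    [NormedAddCommGroup K] [InnerProductSpace ℂ K]
    (M : Set (H →L[ℂ] H)) (Ω₁ : H) (Ω₂ : K)
    (Φ : (H →L[ℂ] H) →ₗ[ℂ] (K →L[ℂ] K)) : Prop :=
  ∀ A ∈ M, ⟪Ω₂, Φ A Ω₂⟫_ℂ = ⟪Ω₁, A Ω₁⟫_ℂ
/-- The modular conjugation of a von Neumann algebra `M` in standard form with cyclic and
separating vector `Ω`: an anti-unitary involution `J` fixing `Ω`, together with the induced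
conjugation `conj A = J A J` on operators, which exchanges `M` with its commutant `M'` and
acts as the identity on the natural positive cone. -/
structure ModularConjugation {H : Type*}
    [NormedAddCommGroup H] [InnerProductSpace ℂ H] [CompleteSpace H]
    (M : VonNeumannAlgebra H) (Ω : H) where
  J : H → H
  conj : (H →L[ℂ] H) → (H →L[ℂ] H)
  map_add : ∀ x y, J (x + y) = J x + J y
  map_smul : ∀ (a : ℂ) (x : H), J (a • x) = (starRingEnd ℂ a) • J x
  invol : ∀ x, J (J x) = x
  inner_map : ∀ x y, ⟪J x, J y⟫_ℂ = ⟪y, x⟫_ℂ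
  fixΩ : J Ω = Ω
  conj_apply : ∀ (A : H →L[ℂ] H) (x : H), conj A x = J (A (J x))
  conj_mem : ∀ A ∈ M, conj A ∈ M.commutant
  conj_mem' : ∀ Y ∈ M.commutant, conj Y ∈ M
  fix_cone : ∀ A ∈ M, J ((A * conj A) Ω) = (A * conj A) Ω

/-- The von Neumann algebra (as a set of operators) generated by a self-adjoint set `S`
of bounded operators: the double commutant of `S`. -/
def doubleCommutant {K : Type*} [NormedAddCommGroup K] [InnerProductSpace ℂ K]
    (S : Set (K →L[ℂ] K)) : Set (K →L[ℂ] K) :=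
  Set.centralizer (Set.centralizer S)

set_option maxHeartbeats 1000000 in
/-- A state-preserving Markov map `Φ` with adjoint `Φ^♯` between
*abelian* standard-form von Neumann algebras (`Mᵢ = Mᵢ'`) is factorizable, with minimal
factorization `α = σ_{Φ^♯}` and `β(A) = W* τ_{Φ'}(J₁ A J₁) W`, where
`W : L_{Φ^♯} → L_{Φ'}` is the anti-unitary `W[X ⊗ h] = [J₂ X J₂ ⊗ J₁ h]`; the
factorizing algebra `R = σ_{Φ^♯}(M₂) ∨ τ_{Φ^♯}(M₁)` has `Ω_{Φ^♯}` as a cyclic and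
separating vector, and in fact `β = τ_{Φ^♯}` on `M₁`. -/
theorem stmt19
    {H₁ H₂ : Type*} [NormedAddCommGroup H₁] [InnerProductSpace ℂ H₁] [CompleteSpace H₁]
    [NormedAddCommGroup H₂] [InnerProductSpace ℂ H₂] [CompleteSpace H₂]
    (M₁ : VonNeumannAlgebra H₁) (M₂ : VonNeumannAlgebra H₂) (Ω₁ : H₁) (Ω₂ : H₂)
    (hΩ₁ : ‖Ω₁‖ = 1) (hΩ₂ : ‖Ω₂‖ = 1)
    (hcyc₁ : IsCyclicVec (M₁ : Set (H₁ →L[ℂ] H₁)) Ω₁)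
    (hsep₁ : IsSeparatingVec (M₁ : Set (H₁ →L[ℂ] H₁)) Ω₁)
    (hcyc₂ : IsCyclicVec (M₂ : Set (H₂ →L[ℂ] H₂)) Ω₂)
    (hsep₂ : IsSeparatingVec (M₂ : Set (H₂ →L[ℂ] H₂)) Ω₂)
    -- the algebras are abelian and in standard form, so Mᵢ = Mᵢ'
    (habel₁ : M₁.commutant = M₁) (habel₂ : M₂.commutant = M₂)
    (J₁ : ModularConjugation M₁ Ω₁) (J₂ : ModularConjugation M₂ Ω₂)
    (Φ : (H₁ →L[ℂ] H₁) →ₗ[ℂ] (H₂ →L[ℂ] H₂))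
    (hmem : ∀ A ∈ M₁, Φ A ∈ M₂) (hunital : Φ 1 = 1)
    (hCP : IsCP (M₁ : Set (H₁ →L[ℂ] H₁)) Φ)
    (hstate : IsStatePreserving (M₁ : Set (H₁ →L[ℂ] H₁)) Ω₁ Ω₂ Φ)
    (Φs : (H₂ →L[ℂ] H₂) →ₗ[ℂ] (H₁ →L[ℂ] H₁))
    (hmems : ∀ B ∈ M₂, Φs B ∈ M₁) (hunitals : Φs 1 = 1)
    (hCPs : IsCP (M₂ : Set (H₂ →L[ℂ] H₂)) Φs)
    (hstates : IsStatePreserving (M₂ : Set (H₂ →L[ℂ] H₂)) Ω₂ Ω₁ Φs)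
    (hadj : ∀ A ∈ M₁, ∀ B ∈ M₂, ⟪Ω₂, B (Φ A Ω₂)⟫_ℂ = ⟪Ω₁, Φs B (A Ω₁)⟫_ℂ)
    -- the dual map Φ'(Y) = J₁ Φ^♯(J₂ Y J₂) J₁
    (Φ' : (H₂ →L[ℂ] H₂) →ₗ[ℂ] (H₁ →L[ℂ] H₁))
    (hΦ' : ∀ Y ∈ M₂.commutant, Φ' Y = J₁.conj (Φs (J₂.conj Y)))
    -- Stinespring data of Φ^♯, with σ, τ, Λ
    (Ls : Type*) [NormedAddCommGroup Ls] [InnerProductSpace ℂ Ls] [CompleteSpace Ls]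
    (Ss : StinespringData (M₂ : Set (H₂ →L[ℂ] H₂)) Φs Ls)
    (σ : (H₂ →L[ℂ] H₂) → (Ls →L[ℂ] Ls))
    (hσ : ∀ A ∈ M₂, ∀ X ∈ M₂, ∀ h : H₁, σ A (Ss.emb X h) = Ss.emb (A * X) h)
    (τ : (H₁ →L[ℂ] H₁) → (Ls →L[ℂ] Ls))
    (hτ : ∀ Y ∈ M₁.commutant, ∀ X ∈ M₂, ∀ h : H₁, τ Y (Ss.emb X h) = Ss.emb X (Y h))
    (Λ : H₂ →L[ℂ] Ls) (hΛ : ∀ B ∈ M₂, Λ (B Ω₂) = Ss.emb B Ω₁)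
    -- Stinespring data of Φ', with τ'
    (L' : Type*) [NormedAddCommGroup L'] [InnerProductSpace ℂ L'] [CompleteSpace L']
    (S' : StinespringData (M₂.commutant : Set (H₂ →L[ℂ] H₂)) Φ' L')
    (τ' : (H₁ →L[ℂ] H₁) → (L' →L[ℂ] L'))
    (hτ' : ∀ Y ∈ M₁.commutant, ∀ X ∈ M₂.commutant, ∀ h : H₁,
      τ' Y (S'.emb X h) = S'.emb X (Y h))
    -- the anti-unitary W : L_{Φ^♯} → L_{Φ'}, W[X ⊗ h] = [J₂ X J₂ ⊗ J₁ h], inverse W'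
    (W : Ls → L') (W' : L' → Ls)
    (hW_add : ∀ x y, W (x + y) = W x + W y)
    (hW_smul : ∀ (c : ℂ) (x : Ls), W (c • x) = (starRingEnd ℂ c) • W x)
    (hW_inner : ∀ x y, ⟪W x, W y⟫_ℂ = ⟪y, x⟫_ℂ)
    (hW_inv : ∀ x, W' (W x) = x) (hW_inv' : ∀ y, W (W' y) = y)
    (hW : ∀ X ∈ M₂, ∀ h : H₁, W (Ss.emb X h) = S'.emb (J₂.conj X) (J₁.J h))
    -- β(A) = W* τ_{Φ'}(J₁ A J₁) W
    (βop : (H₁ →L[ℂ] H₁) → (Ls →L[ℂ] Ls))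
    (hβ : ∀ A ∈ M₁, ∀ x : Ls, βop A x = W' (τ' (J₁.conj A) (W x))) :
    -- in the abelian case β coincides with τ_{Φ^♯} on M₁
    (∀ A ∈ M₁, βop A = τ A) ∧
    -- Ω_{Φ^♯} is cyclic and separating for R = σ_{Φ^♯}(M₂) ∨ τ_{Φ^♯}(M₁)
    ((Submodule.span ℂ {x : Ls | ∃ T ∈ doubleCommutant
        ({T | ∃ A ∈ M₂, T = σ A} ∪ {T | ∃ A ∈ M₁, T = τ A}),
      x = T (Ss.emb 1 Ω₁)}).topologicalClosure = ⊤) ∧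
    (∀ T ∈ doubleCommutant
        ({T | ∃ A ∈ M₂, T = σ A} ∪ {T | ∃ A ∈ M₁, T = τ A}),
      T (Ss.emb 1 Ω₁) = 0 → T = 0) ∧
    -- β is a state-preserving *-homomorphism into R
    (∀ A ∈ M₁, βop A ∈ doubleCommutant
        ({T | ∃ A ∈ M₂, T = σ A} ∪ {T | ∃ A ∈ M₁, T = τ A})) ∧
    (∀ A ∈ M₁, ∀ B ∈ M₁, βop (A * B) = βop A * βop B) ∧
    (∀ A ∈ M₁, βop (star A) = adjoint (βop A)) ∧
    (∀ A ∈ M₁, ⟪Ss.emb 1 Ω₁, βop A (Ss.emb 1 Ω₁)⟫_ℂ = ⟪Ω₁, A Ω₁⟫_ℂ) ∧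
    -- α = σ_{Φ^♯} maps into R
    (∀ A ∈ M₂, σ A ∈ doubleCommutant
        ({T | ∃ A ∈ M₂, T = σ A} ∪ {T | ∃ A ∈ M₁, T = τ A})) ∧
    -- factorization Φ = σ_{Φ^♯}^♯ ∘ β, and its minimality
    (∀ A ∈ M₁, Φ A = adjoint Λ ∘L βop A ∘L Λ) ∧
    doubleCommutant ({T | ∃ A ∈ M₂, T = σ A} ∪ {T | ∃ A ∈ M₁, T = τ A}) =
      doubleCommutant ({T | ∃ A ∈ M₂, T = σ A} ∪ {T | ∃ A ∈ M₁, T = βop A}) := by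
  classical
  -- basic membership conversions
  have hm₁c : ∀ A, A ∈ M₁ → A ∈ M₁.commutant := fun A hA => by rw [habel₁]; exact hA
  have hm₂c : ∀ A, A ∈ M₂ → A ∈ M₂.commutant := fun A hA => by rw [habel₂]; exact hA
  have comm₁ : ∀ A ∈ M₁, ∀ B ∈ M₁, A * B = B * A := fun A hA B hB =>
    VonNeumannAlgebra.mem_commutant_iff.mp (hm₁c B hB) A hA
  have comm₂ : ∀ A ∈ M₂, ∀ B ∈ M₂, A * B = B * A := fun A hA B hB =>
    VonNeumannAlgebra.mem_commutant_iff.mp (hm₂c B hB) A hA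
  -- density of the elementary tensors
  have hdense : Dense
      ((Submodule.span ℂ {x : Ls | ∃ A ∈ (M₂ : Set (H₂ →L[ℂ] H₂)), ∃ h : H₁, x = Ss.emb A h} :
        Submodule ℂ Ls) : Set Ls) := by
    rw [Submodule.dense_iff_topologicalClosure_eq_top]
    exact Ss.dense_span
  have ext_emb : ∀ T S : Ls →L[ℂ] Ls,
      (∀ X ∈ M₂, ∀ h : H₁, T (Ss.emb X h) = S (Ss.emb X h)) → T = S := by
    intro T S hTS
    refine ContinuousLinearMap.ext_on hdense ?_
    rintro x ⟨X, hX, h, rfl⟩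
    exact hTS X hX h
  have inner_zero : ∀ v : Ls, (∀ X ∈ M₂, ∀ h : H₁, ⟪v, Ss.emb X h⟫_ℂ = 0) → v = 0 := by
    intro v hv
    have hz : (innerSL ℂ v : Ls →L[ℂ] ℂ) = 0 := by
      refine ContinuousLinearMap.ext_on hdense ?_
      rintro x ⟨X, hX, h, rfl⟩
      simpa using hv X hX h
    have h2 : ⟪v, v⟫_ℂ = 0 := by
      have := congrArg (fun f : Ls →L[ℂ] ℂ => f v) hz
      simpa using this
    exact inner_self_eq_zero.mp h2
  have inner_ext : ∀ v w : Ls,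
      (∀ X ∈ M₂, ∀ h : H₁, ⟪v, Ss.emb X h⟫_ℂ = ⟪w, Ss.emb X h⟫_ℂ) → v = w := by
    intro v w hvw
    have := inner_zero (v - w) (fun X hX h => by
      rw [inner_sub_left, hvw X hX h, sub_self])
    exact sub_eq_zero.mp this
  -- β = τ on M₁
  have hβτ : ∀ A ∈ M₁, βop A = τ A := by
    intro A hA
    refine ext_emb _ _ fun X hX h => ?_
    rw [hβ A hA, hW X hX h,
      hτ' (J₁.conj A) (J₁.conj_mem A hA) (J₂.conj X) (J₂.conj_mem X hX) (J₁.J h)]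
    have hJ : J₁.conj A (J₁.J h) = J₁.J (A h) := by rw [J₁.conj_apply, J₁.invol]
    rw [hJ, ← hW X hX (A h), hW_inv, hτ A (hm₁c A hA) X hX h]
  -- generators commute with each other
  have hστ : ∀ A ∈ M₂, ∀ Y ∈ M₁, σ A * τ Y = τ Y * σ A := by
    intro A hA Y hY
    refine ext_emb _ _ fun X hX h => ?_
    simp only [ContinuousLinearMap.mul_apply]
    rw [hτ Y (hm₁c Y hY) X hX h, hσ A hA X hX h, hσ A hA X hX (Y h),
      hτ Y (hm₁c Y hY) (A * X) (mul_mem hA hX) h]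
  have hσσ : ∀ A ∈ M₂, ∀ B ∈ M₂, σ A * σ B = σ B * σ A := by
    intro A hA B hB
    refine ext_emb _ _ fun X hX h => ?_
    simp only [ContinuousLinearMap.mul_apply]
    rw [hσ B hB X hX h, hσ A hA X hX h, hσ A hA (B * X) (mul_mem hB hX) h,
      hσ B hB (A * X) (mul_mem hA hX) h, ← mul_assoc, ← mul_assoc, comm₂ A hA B hB]
  have hττ : ∀ Y ∈ M₁, ∀ Z ∈ M₁, τ Y * τ Z = τ Z * τ Y := by
    intro Y hY Z hZ
    refine ext_emb _ _ fun X hX h => ?_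
    simp only [ContinuousLinearMap.mul_apply]
    rw [hτ Z (hm₁c Z hZ) X hX h, hτ Y (hm₁c Y hY) X hX h, hτ Y (hm₁c Y hY) X hX (Z h),
      hτ Z (hm₁c Z hZ) X hX (Y h)]
    have : Y (Z h) = Z (Y h) := by
      have := congrArg (fun g : H₁ →L[ℂ] H₁ => g h) (comm₁ Y hY Z hZ)
      simpa using this
    rw [this]
  -- the generating set and its commutation properties
  set gen : Set (Ls →L[ℂ] Ls) :=
    {T | ∃ A ∈ M₂, T = σ A} ∪ {T | ∃ A ∈ M₁, T = τ A} with hgen_def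
  have hgen_comm : ∀ g₁ ∈ gen, ∀ g₂ ∈ gen, g₁ * g₂ = g₂ * g₁ := by
    rintro g₁ (⟨A, hA, rfl⟩ | ⟨Y, hY, rfl⟩) g₂ (⟨B, hB, rfl⟩ | ⟨Z, hZ, rfl⟩)
    · exact hσσ A hA B hB
    · exact hστ A hA Z hZ
    · exact (hστ B hB Y hY).symm
    · exact hττ Y hY Z hZ
  have hgen_sub : gen ⊆ Set.centralizer gen := fun g hg m hm => hgen_comm m hm g hg
  have hgenR : gen ⊆ doubleCommutant gen := Set.subset_centralizer_centralizer
  have hRsub : doubleCommutant gen ⊆ Set.centralizer gen := Set.centralizer_subset hgen_sub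
  have hσR : ∀ A ∈ M₂, σ A ∈ doubleCommutant gen := fun A hA =>
    hgenR (Or.inl ⟨A, hA, rfl⟩)
  have hτR : ∀ A ∈ M₁, τ A ∈ doubleCommutant gen := fun A hA =>
    hgenR (Or.inr ⟨A, hA, rfl⟩)
  -- continuity of h ↦ emb X h
  have embClm : ∀ X ∈ M₂, ∃ f : H₁ →L[ℂ] Ls, ∀ h, f h = Ss.emb X h := by
    intro X hX
    set T : H₁ →L[ℂ] H₁ := Φs (star X * X) with hT
    have hb : ∀ h : H₁, ‖Ss.emb X h‖ ≤ Real.sqrt ‖T‖ * ‖h‖ := by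
      intro h
      have h1 : ⟪Ss.emb X h, Ss.emb X h⟫_ℂ = ⟪h, T h⟫_ℂ :=
        Ss.inner_emb X X hX hX h h
      have h2 : (‖Ss.emb X h‖ : ℝ) ^ 2 = ‖⟪h, T h⟫_ℂ‖ := by
        rw [← h1, inner_self_eq_norm_sq_to_K]
        simp
      have h3 : ‖⟪h, T h⟫_ℂ‖ ≤ ‖h‖ * (‖T‖ * ‖h‖) := by
        refine (norm_inner_le_norm _ _).trans ?_
        gcongr
        exact T.le_opNorm h
      have h4 : ‖Ss.emb X h‖ ^ 2 ≤ ‖T‖ * ‖h‖ ^ 2 := by nlinarith [h2, h3]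
      calc ‖Ss.emb X h‖ = Real.sqrt (‖Ss.emb X h‖ ^ 2) :=
            (Real.sqrt_sq (norm_nonneg _)).symm
        _ ≤ Real.sqrt (‖T‖ * ‖h‖ ^ 2) := Real.sqrt_le_sqrt h4
        _ = Real.sqrt ‖T‖ * ‖h‖ := by
            rw [Real.sqrt_mul (norm_nonneg T), Real.sqrt_sq (norm_nonneg h)]
    exact ⟨LinearMap.mkContinuous (Ss.emb X) _ hb, fun h => rfl⟩
  -- cyclicity of Ω_s for R
  have hcycR : (Submodule.span ℂ
      {x : Ls | ∃ T ∈ doubleCommutant gen, x = T (Ss.emb 1 Ω₁)}).topologicalClosure = ⊤ := by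
    set N := (Submodule.span ℂ
      {x : Ls | ∃ T ∈ doubleCommutant gen, x = T (Ss.emb 1 Ω₁)}).topologicalClosure with hN
    have hNclosed : IsClosed (N : Set Ls) := Submodule.isClosed_topologicalClosure _
    have hXall : ∀ X ∈ M₂, ∀ h : H₁, Ss.emb X h ∈ N := by
      intro X hX
      obtain ⟨f, hf⟩ := embClm X hX
      have hpre : IsClosed ((Submodule.comap (f : H₁ →ₗ[ℂ] Ls) N : Submodule ℂ H₁) : Set H₁) :=
        hNclosed.preimage f.continuous
      have hsp : Submodule.span ℂ {x : H₁ | ∃ A ∈ (M₁ : Set (H₁ →L[ℂ] H₁)), x = A Ω₁} ≤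
          Submodule.comap (f : H₁ →ₗ[ℂ] Ls) N := by
        rw [Submodule.span_le]
        rintro x ⟨Y, hY, rfl⟩
        have hmemR : σ X * τ Y ∈ doubleCommutant gen :=
          Set.mul_mem_centralizer (hσR X hX) (hτR Y hY)
        have happ : (σ X * τ Y) (Ss.emb 1 Ω₁) = Ss.emb X (Y Ω₁) := by
          rw [ContinuousLinearMap.mul_apply, hτ Y (hm₁c Y hY) 1 (one_mem M₂) Ω₁,
            hσ X hX 1 (one_mem M₂) (Y Ω₁), mul_one]
        show f (Y Ω₁) ∈ N
        rw [hf]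
        exact Submodule.le_topologicalClosure _
          (Submodule.subset_span ⟨σ X * τ Y, hmemR, happ.symm⟩)
      have htop : (⊤ : Submodule ℂ H₁) ≤ Submodule.comap (f : H₁ →ₗ[ℂ] Ls) N := by
        rw [← hcyc₁]
        exact Submodule.topologicalClosure_minimal _ hsp hpre
      intro h
      have : h ∈ Submodule.comap (f : H₁ →ₗ[ℂ] Ls) N := htop trivial
      simpa [hf] using this
    have hsp2 : Submodule.span ℂ
        {x : Ls | ∃ A ∈ (M₂ : Set (H₂ →L[ℂ] H₂)), ∃ h : H₁, x = Ss.emb A h} ≤ N := by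
      rw [Submodule.span_le]
      rintro x ⟨X, hX, h, rfl⟩
      exact hXall X hX h
    have := Submodule.topologicalClosure_minimal _ hsp2 hNclosed
    rw [Ss.dense_span] at this
    exact top_le_iff.mp this
  -- separation
  have hsepR : ∀ T ∈ doubleCommutant gen, T (Ss.emb 1 Ω₁) = 0 → T = 0 := by
    intro T hT hT0
    have hvanish : ∀ X ∈ M₂, ∀ Y ∈ M₁, T (Ss.emb X (Y Ω₁)) = 0 := by
      intro X hX Y hY
      have hmemc : σ X * τ Y ∈ Set.centralizer gen :=
        Set.mul_mem_centralizer (hgen_sub (Or.inl ⟨X, hX, rfl⟩))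
          (hgen_sub (Or.inr ⟨Y, hY, rfl⟩))
      have hcommT : (σ X * τ Y) * T = T * (σ X * τ Y) := hT _ hmemc
      have happ : (σ X * τ Y) (Ss.emb 1 Ω₁) = Ss.emb X (Y Ω₁) := by
        rw [ContinuousLinearMap.mul_apply, hτ Y (hm₁c Y hY) 1 (one_mem M₂) Ω₁,
          hσ X hX 1 (one_mem M₂) (Y Ω₁), mul_one]
      calc T (Ss.emb X (Y Ω₁)) = (T * (σ X * τ Y)) (Ss.emb 1 Ω₁) := by
            rw [ContinuousLinearMap.mul_apply, happ]
        _ = ((σ X * τ Y) * T) (Ss.emb 1 Ω₁) := by rw [hcommT]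
        _ = (σ X * τ Y) (T (Ss.emb 1 Ω₁)) := ContinuousLinearMap.mul_apply _ _ _
        _ = 0 := by rw [hT0, map_zero]
    have hall : ∀ X ∈ M₂, ∀ h : H₁, T (Ss.emb X h) = 0 := by
      intro X hX
      obtain ⟨f, hf⟩ := embClm X hX
      have hker : Submodule.span ℂ {x : H₁ | ∃ A ∈ (M₁ : Set (H₁ →L[ℂ] H₁)), x = A Ω₁} ≤
          LinearMap.ker ((T.comp f : H₁ →L[ℂ] Ls) : H₁ →ₗ[ℂ] Ls) := by
        rw [Submodule.span_le]
        rintro x ⟨Y, hY, rfl⟩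
        have hz : (T.comp f) (Y Ω₁) = 0 := by
          rw [ContinuousLinearMap.comp_apply, hf]
          exact hvanish X hX Y hY
        exact LinearMap.mem_ker.mpr hz
      have hclosed : IsClosed ((LinearMap.ker ((T.comp f : H₁ →L[ℂ] Ls) : H₁ →ₗ[ℂ] Ls) : Submodule ℂ H₁) : Set H₁) :=
        ContinuousLinearMap.isClosed_ker (T.comp f)
      have htop : (⊤ : Submodule ℂ H₁) ≤ LinearMap.ker ((T.comp f : H₁ →L[ℂ] Ls) : H₁ →ₗ[ℂ] Ls) := by
        rw [← hcyc₁]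
        exact Submodule.topologicalClosure_minimal _ hker hclosed
      intro h
      have hmemk : h ∈ LinearMap.ker ((T.comp f : H₁ →L[ℂ] Ls) : H₁ →ₗ[ℂ] Ls) := htop (trivial : h ∈ (⊤ : Submodule ℂ H₁))
      have : (T.comp f) h = 0 := LinearMap.mem_ker.mp hmemk
      rwa [ContinuousLinearMap.comp_apply, hf] at this
    refine ext_emb T 0 fun X hX h => ?_
    rw [hall X hX h]
    rfl
  -- τ is multiplicative on M₁
  have hτmul : ∀ A ∈ M₁, ∀ B ∈ M₁, τ (A * B) = τ A * τ B := by
    intro A hA B hB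
    refine ext_emb _ _ fun X hX h => ?_
    have h1 := hτ (A * B) (hm₁c _ (mul_mem hA hB)) X hX h
    have h2 := hτ B (hm₁c B hB) X hX h
    have h3 := hτ A (hm₁c A hA) X hX (B h)
    simp only [ContinuousLinearMap.mul_apply, h1, h2, h3]
  -- τ is star-preserving
  have hτstar : ∀ A ∈ M₁, τ (star A) = adjoint (τ A) := by
    intro A hA
    refine ext_emb _ _ fun X hX h => ?_
    refine inner_ext _ _ fun X' hX' k => ?_
    rw [hτ (star A) (hm₁c _ (star_mem hA)) X hX h]
    have hr : ⟪(adjoint (τ A)) (Ss.emb X h), Ss.emb X' k⟫_ℂ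
        = ⟪Ss.emb X h, Ss.emb X' (A k)⟫_ℂ := by
      rw [ContinuousLinearMap.adjoint_inner_left, hτ A (hm₁c A hA) X' hX' k]
    rw [hr, Ss.inner_emb X X' hX hX' h (A k), Ss.inner_emb X X' hX hX' (star A h) k]
    have hP : Φs (star X * X') ∈ M₁ := hmems _ (mul_mem (star_mem hX) hX')
    have hstarA : ⟪(star A) h, Φs (star X * X') k⟫_ℂ
        = ⟪h, A ((Φs (star X * X')) k)⟫_ℂ := by
      rw [ContinuousLinearMap.star_eq_adjoint, ContinuousLinearMap.adjoint_inner_left]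
    rw [hstarA]
    have : A ((Φs (star X * X')) k) = (Φs (star X * X')) (A k) := by
      have := congrArg (fun g : H₁ →L[ℂ] H₁ => g k) (comm₁ A hA _ hP)
      simpa using this
    rw [this]
  -- state preservation of τ
  have hτstate : ∀ A ∈ M₁, ⟪Ss.emb 1 Ω₁, τ A (Ss.emb 1 Ω₁)⟫_ℂ = ⟪Ω₁, A Ω₁⟫_ℂ := by
    intro A hA
    rw [hτ A (hm₁c A hA) 1 (one_mem M₂) Ω₁,
      Ss.inner_emb 1 1 (one_mem M₂) (one_mem M₂) Ω₁ (A Ω₁)]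
    simp [hunitals]
  -- the factorization Φ = Λ* τ Λ
  have hdense₂ : Dense
      ((Submodule.span ℂ {x : H₂ | ∃ A ∈ (M₂ : Set (H₂ →L[ℂ] H₂)), x = A Ω₂} :
        Submodule ℂ H₂) : Set H₂) := by
    rw [Submodule.dense_iff_topologicalClosure_eq_top]
    exact hcyc₂
  have inner_zero₂ : ∀ v : H₂, (∀ C ∈ M₂, ⟪v, C Ω₂⟫_ℂ = 0) → v = 0 := by
    intro v hv
    have hz : (innerSL ℂ v : H₂ →L[ℂ] ℂ) = 0 := by
      refine ContinuousLinearMap.ext_on hdense₂ ?_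
      rintro x ⟨C, hC, rfl⟩
      simpa using hv C hC
    have h2 : ⟪v, v⟫_ℂ = 0 := by
      have := congrArg (fun f : H₂ →L[ℂ] ℂ => f v) hz
      simpa using this
    exact inner_self_eq_zero.mp h2
  have hfact : ∀ A ∈ M₁, Φ A = adjoint Λ ∘L τ A ∘L Λ := by
    intro A hA
    refine ContinuousLinearMap.ext_on hdense₂ ?_
    rintro x ⟨B, hB, rfl⟩
    have key : ∀ C ∈ M₂, ⟪C Ω₂, (Φ A) (B Ω₂)⟫_ℂ
        = ⟪C Ω₂, (adjoint Λ ∘L τ A ∘L Λ) (B Ω₂)⟫_ℂ := by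
      intro C hC
      have hl : ⟪C Ω₂, (Φ A) (B Ω₂)⟫_ℂ = ⟪Ω₁, Φs (star C * B) (A Ω₁)⟫_ℂ := by
        have h1 : ⟪C Ω₂, (Φ A) (B Ω₂)⟫_ℂ = ⟪Ω₂, (adjoint C) ((Φ A) (B Ω₂))⟫_ℂ :=
          (ContinuousLinearMap.adjoint_inner_right C Ω₂ ((Φ A) (B Ω₂))).symm
        have h2 : (adjoint C) ((Φ A) (B Ω₂)) = ((star C) * ((Φ A) * B)) Ω₂ := by
          rw [← ContinuousLinearMap.star_eq_adjoint]
          rfl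
        have h3 : (Φ A) * B = B * (Φ A) := comm₂ _ (hmem A hA) B hB
        have h4 : ((star C) * ((Φ A) * B)) Ω₂ = ((star C * B)) ((Φ A) Ω₂) := by
          rw [h3, ← mul_assoc]
          rfl
        rw [h1, h2, h4]
        exact hadj A hA (star C * B) (mul_mem (star_mem hC) hB)
      have hr : ⟪C Ω₂, (adjoint Λ ∘L τ A ∘L Λ) (B Ω₂)⟫_ℂ
          = ⟪Ω₁, Φs (star C * B) (A Ω₁)⟫_ℂ := by
        have e1 : (adjoint Λ ∘L τ A ∘L Λ) (B Ω₂) = adjoint Λ ((τ A) (Λ (B Ω₂))) := rfl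
        rw [e1, ContinuousLinearMap.adjoint_inner_right Λ (C Ω₂) ((τ A) (Λ (B Ω₂))),
          hΛ B hB, hΛ C hC, hτ A (hm₁c A hA) B hB Ω₁, Ss.inner_emb C B hC hB Ω₁ (A Ω₁)]
      rw [hl, hr]
    have hdiff : (Φ A) (B Ω₂) - (adjoint Λ ∘L τ A ∘L Λ) (B Ω₂) = 0 := by
      refine inner_zero₂ _ fun C hC => ?_
      have := key C hC
      rw [inner_sub_left]
      have h1 : ⟪(Φ A) (B Ω₂), C Ω₂⟫_ℂ = ⟪(adjoint Λ ∘L τ A ∘L Λ) (B Ω₂), C Ω₂⟫_ℂ := by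
        rw [← inner_conj_symm, this, inner_conj_symm]
      rw [h1, sub_self]
    exact sub_eq_zero.mp hdiff
  -- assembling everything
  refine ⟨hβτ, hcycR, hsepR, ?_, ?_, ?_, ?_, hσR, ?_, ?_⟩
  · intro A hA
    rw [hβτ A hA]
    exact hτR A hA
  · intro A hA B hB
    rw [hβτ A hA, hβτ B hB, hβτ (A * B) (mul_mem hA hB)]
    exact hτmul A hA B hB
  · intro A hA
    rw [hβτ A hA, hβτ (star A) (star_mem hA)]
    exact hτstar A hA
  · intro A hA
    rw [hβτ A hA]
    exact hτstate A hA
  · intro A hA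
    rw [hβτ A hA]
    exact hfact A hA
  · have hset : {T | ∃ A ∈ M₁, T = τ A} = {T | ∃ A ∈ M₁, T = βop A} := by
      ext T
      constructor
      · rintro ⟨A, hA, rfl⟩
        exact ⟨A, hA, (hβτ A hA).symm⟩
      · rintro ⟨A, hA, rfl⟩
        exact ⟨A, hA, hβτ A hA⟩
    rw [hgen_def, hset]
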